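/- arXiv:1811.02540 — 8 statements merged into one kernel-verified Lean document; each statement's English description precedes it below -/
import Mathlib

section
/- Let X and Y be nonempty convex compact subsets of a finite-dimensional real inner product space E, let ℓ^1,…,ℓ^T : E → ℝ be linear functions, and let Δ² = {(λ1,λ2) ∈ ℝ²_{≥0} : λ1+λ2 = 1}. Given decisions λ^t ∈ Δ², x^t ∈ X, y^t ∈ Y for t = 1,…,T, define the local regrets R_X^T = Σ_t ℓ^t(x^t) − min_{x̂∈X} Σ_t ℓ^t(x̂), R_Y^T = Σ_t ℓ^t(y^t) − min_{ŷ∈Y} Σ_t ℓ^t(ŷ), and the simplex regret R_{Δ²}^T = Σ_t (λ1^t ℓ^t(x^t) + λ2^t ℓ^t(y^t)) − min_{λ̂∈Δ²} Σ_t (λ̂1 ℓ^t(x^t) + λ̂2 ℓ^t(y^t)). Then the regret on the convex hull co{X,Y} of the composite decisions λ1^t x^t + λ2^t y^t satisfies: Σ_{t=1}^T ℓ^t(λ1^t x^t + λ2^t y^t) − min_{ẑ ∈ co{X,Y}} Σ_{t=1}^T ℓ^t(ẑ) ≤ R_{Δ²}^T + max{ R_X^T, R_Y^T }. -/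
open RealInnerProductSpace

/-- The two-dimensional simplex Δ². -/
def simplexTwo : Set (ℝ × ℝ) := {p : ℝ × ℝ | 0 ≤ p.1 ∧ 0 ≤ p.2 ∧ p.1 + p.2 = 1}

/-- The convex hull co{X, Y} of two sets. -/
def coHull {E : Type*} [NormedAddCommGroup E] [InnerProductSpace ℝ E] (X Y : Set E) : Set E :=
  {z : E | ∃ x ∈ X, ∃ y ∈ Y, ∃ p ∈ simplexTwo, z = p.1 • x + p.2 • y}

/-- The regret on the convex hull co{X,Y} of the composite decisions
λ1^t x^t + λ2^t y^t is at most the simplex regret plus the maximum of the two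
local regrets. -/
theorem regret_convex_hull
    {E : Type*} [NormedAddCommGroup E] [InnerProductSpace ℝ E] [FiniteDimensional ℝ E]
    (X Y : Set E)
    (hXne : X.Nonempty) (hXconv : Convex ℝ X) (hXcomp : IsCompact X)
    (hYne : Y.Nonempty) (hYconv : Convex ℝ Y) (hYcomp : IsCompact Y)
    (T : ℕ) (ℓ : Fin T → E →ₗ[ℝ] ℝ)
    (lam : Fin T → ℝ × ℝ) (hlam : ∀ t, lam t ∈ simplexTwo)
    (x y : Fin T → E) (hx : ∀ t, x t ∈ X) (hy : ∀ t, y t ∈ Y) :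
    (∑ t, ℓ t ((lam t).1 • x t + (lam t).2 • y t))
        - sInf ((fun z => ∑ t, ℓ t z) '' coHull X Y)
      ≤ ((∑ t, ((lam t).1 * ℓ t (x t) + (lam t).2 * ℓ t (y t)))
            - sInf ((fun p => ∑ t, (p.1 * ℓ t (x t) + p.2 * ℓ t (y t))) '' simplexTwo))
        + max ((∑ t, ℓ t (x t)) - sInf ((fun x' => ∑ t, ℓ t x') '' X))
              ((∑ t, ℓ t (y t)) - sInf ((fun y' => ∑ t, ℓ t y') '' Y)) := by
  classical
  set F : E → ℝ := fun z => ∑ t, ℓ t z with hF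
  have hFcont : Continuous F := by
    apply continuous_finset_sum
    intro t _
    exact (ℓ t).continuous_of_finiteDimensional
  set A : ℝ := ∑ t, ℓ t (x t) with hA
  set B : ℝ := ∑ t, ℓ t (y t) with hB
  set IX : ℝ := sInf (F '' X) with hIX
  set IY : ℝ := sInf (F '' Y) with hIY
  -- bounds on X and Y infima
  have hXbdd : BddBelow (F '' X) := (hXcomp.image hFcont).bddBelow
  have hYbdd : BddBelow (F '' Y) := (hYcomp.image hFcont).bddBelow
  have hIXle : ∀ x' ∈ X, IX ≤ F x' := fun x' hx' => csInf_le hXbdd ⟨x', hx', rfl⟩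
  have hIYle : ∀ y' ∈ Y, IY ≤ F y' := fun y' hy' => csInf_le hYbdd ⟨y', hy', rfl⟩
  -- first sum rewriting
  have hS : (∑ t, ℓ t ((lam t).1 • x t + (lam t).2 • y t))
      = ∑ t, ((lam t).1 * ℓ t (x t) + (lam t).2 * ℓ t (y t)) := by
    apply Finset.sum_congr rfl
    intro t _
    simp [map_add, map_smul, smul_eq_mul]
  -- simplex infimum is at most min A B
  set g : ℝ × ℝ → ℝ := fun p => ∑ t, (p.1 * ℓ t (x t) + p.2 * ℓ t (y t)) with hg
  have hgval : ∀ p : ℝ × ℝ, g p = p.1 * A + p.2 * B := by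
    intro p
    simp [hg, hA, hB, Finset.sum_add_distrib, Finset.mul_sum]
  have hgbdd : BddBelow (g '' simplexTwo) := by
    refine ⟨min A B, ?_⟩
    rintro v ⟨p, ⟨hp1, hp2, hp12⟩, rfl⟩
    rw [hgval]
    have h1 : p.1 * min A B ≤ p.1 * A := mul_le_mul_of_nonneg_left (min_le_left _ _) hp1
    have h2 : p.2 * min A B ≤ p.2 * B := mul_le_mul_of_nonneg_left (min_le_right _ _) hp2
    have h0 : p.1 * min A B + p.2 * min A B = min A B := by rw [← add_mul, hp12, one_mul]
    linarith
  have hΔA : sInf (g '' simplexTwo) ≤ A := by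
    have hmem : ((1 : ℝ), (0 : ℝ)) ∈ simplexTwo := by
      constructor <;> norm_num
    have := csInf_le hgbdd ⟨((1 : ℝ), (0 : ℝ)), hmem, rfl⟩
    rwa [hgval, one_mul, zero_mul, add_zero] at this
  have hΔB : sInf (g '' simplexTwo) ≤ B := by
    have hmem : ((0 : ℝ), (1 : ℝ)) ∈ simplexTwo := by
      constructor <;> norm_num
    have := csInf_le hgbdd ⟨((0 : ℝ), (1 : ℝ)), hmem, rfl⟩
    rwa [hgval, one_mul, zero_mul, zero_add] at this
  -- convex hull infimum is at least min IX IY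
  obtain ⟨x0, hx0⟩ := hXne
  obtain ⟨y0, hy0⟩ := hYne
  have hcoNe : (F '' coHull X Y).Nonempty := by
    refine ⟨F ((1 : ℝ) • x0 + (0 : ℝ) • y0), ⟨_, ⟨x0, hx0, y0, hy0, ((1:ℝ),(0:ℝ)), ?_, rfl⟩, rfl⟩⟩
    constructor <;> norm_num
  have hcoInf : min IX IY ≤ sInf (F '' coHull X Y) := by
    apply le_csInf hcoNe
    rintro v ⟨z, ⟨x', hx', y', hy', p, ⟨hp1, hp2, hp12⟩, rfl⟩, rfl⟩
    have hFz : F (p.1 • x' + p.2 • y') = p.1 * F x' + p.2 * F y' := by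
      simp [hF, map_add, map_smul, smul_eq_mul, Finset.sum_add_distrib, Finset.mul_sum]
    rw [hFz]
    have h1 : p.1 * IX ≤ p.1 * F x' := mul_le_mul_of_nonneg_left (hIXle x' hx') hp1
    have h2 : p.2 * IY ≤ p.2 * F y' := mul_le_mul_of_nonneg_left (hIYle y' hy') hp2
    have h3 : p.1 * min IX IY ≤ p.1 * IX := mul_le_mul_of_nonneg_left (min_le_left _ _) hp1
    have h4 : p.2 * min IX IY ≤ p.2 * IY := mul_le_mul_of_nonneg_left (min_le_right _ _) hp2
    have h0 : p.1 * min IX IY + p.2 * min IX IY = min IX IY := by rw [← add_mul, hp12, one_mul]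
    linarith
  rw [hS]
  have hmaxA : A - IX ≤ max (A - IX) (B - IY) := le_max_left _ _
  have hmaxB : B - IY ≤ max (A - IX) (B - IY) := le_max_right _ _
  have hmin1 : min IX IY ≤ IX := min_le_left _ _
  have hmin2 : min IX IY ≤ IY := min_le_right _ _
  rcases le_total IX IY with h | h <;> rcases le_total A B with h' | h' <;>
    simp only [min_def, max_def] at * <;> split_ifs at * <;> linarith
end

section
/- Let X_1,…,X_n be nonempty convex compact subsets of a finite-dimensional real inner product space E, let ℓ^1,…,ℓ^T : E → ℝ be linear functions, and let Δⁿ = {λ ∈ ℝⁿ_{≥0} : Σ_i λ_i = 1}. Given decisions λ^t ∈ Δⁿ and x_i^t ∈ X_i for each i and t, define the local regrets R_i^T = Σ_t ℓ^t(x_i^t) − min_{x̂∈X_i} Σ_t ℓ^t(x̂) and the simplex regret R_{Δⁿ}^T = Σ_t Σ_i λ_i^t ℓ^t(x_i^t) − min_{λ̂∈Δⁿ} Σ_t Σ_i λ̂_i ℓ^t(x_i^t). Then the regret on co{X_1,…,X_n} of the composite decisions Σ_i λ_i^t x_i^t satisfies: Σ_{t=1}^T ℓ^t(Σ_i λ_i^t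 x_i^t) − min_{ẑ ∈ co{X_1,…,X_n}} Σ_{t=1}^T ℓ^t(ẑ) ≤ R_{Δⁿ}^T + max_{1≤i≤n} R_i^T. -/
open RealInnerProductSpace

/-- The n-dimensional simplex Δⁿ. -/
def simplexN (n : ℕ) : Set (Fin n → ℝ) := {lam | (∀ i, 0 ≤ lam i) ∧ ∑ i, lam i = 1}

/-- The convex hull co{X_1, …, X_n} of n sets. -/
def coHullN {E : Type*} [NormedAddCommGroup E] [InnerProductSpace ℝ E]
    {n : ℕ} (X : Fin n → Set E) : Set E :=
  {z : E | ∃ lam ∈ simplexN n, ∃ x : Fin n → E, (∀ i, x i ∈ X i) ∧ z = ∑ i, lam i • x i}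

/-- The regret on co{X_1,…,X_n} of the composite decisions Σ_i λ_i^t x_i^t
is at most the simplex regret plus the maximum of the n local regrets. -/
theorem regret_convex_hull_n
    {E : Type*} [NormedAddCommGroup E] [InnerProductSpace ℝ E] [FiniteDimensional ℝ E]
    (n : ℕ) (hn : 0 < n) (X : Fin n → Set E)
    (hXne : ∀ i, (X i).Nonempty) (hXconv : ∀ i, Convex ℝ (X i))
    (hXcomp : ∀ i, IsCompact (X i))
    (T : ℕ) (ℓ : Fin T → E →ₗ[ℝ] ℝ)
    (lam : Fin T → Fin n → ℝ) (hlam : ∀ t, lam t ∈ simplexN n)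
    (x : Fin T → Fin n → E) (hx : ∀ t i, x t i ∈ X i) :
    (∑ t, ℓ t (∑ i, lam t i • x t i))
        - sInf ((fun z => ∑ t, ℓ t z) '' coHullN X)
      ≤ ((∑ t, ∑ i, lam t i * ℓ t (x t i))
            - sInf ((fun lam' => ∑ t, ∑ i, lam' i * ℓ t (x t i)) '' simplexN n))
        + ⨆ i, ((∑ t, ℓ t (x t i)) - sInf ((fun x' => ∑ t, ℓ t x') '' X i)) := by
  haveI : Nonempty (Fin n) := ⟨⟨0, hn⟩⟩
  set L : E → ℝ := fun z => ∑ t, ℓ t z with hL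
  have hLcont : Continuous L :=
    continuous_finset_sum _ fun t _ => (ℓ t).continuous_of_finiteDimensional
  set S : Fin n → ℝ := fun i => ∑ t, ℓ t (x t i) with hS
  set m : Fin n → ℝ := fun i => sInf (L '' X i) with hm
  set R : Fin n → ℝ := fun i => S i - m i with hRdef
  -- m i ≤ L y for y ∈ X i
  have hm_le : ∀ i, ∀ y ∈ X i, m i ≤ L y := fun i y hy =>
    csInf_le ((hXcomp i).image hLcont).bddBelow (Set.mem_image_of_mem _ hy)
  have hRle : ∀ i, R i ≤ ⨆ j, R j := fun i =>
    le_ciSup (Set.finite_range R).bddAbove i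
  -- the simplex loss function
  set f : (Fin n → ℝ) → ℝ := fun lam' => ∑ t, ∑ i, lam' i * ℓ t (x t i) with hf
  have hfS : ∀ lam', f lam' = ∑ i, lam' i * S i := by
    intro lam'
    simp only [hf]
    rw [Finset.sum_comm]
    simp [hS, Finset.mul_sum]
  -- linearity of the per-round loss on convex combinations
  have hlin : ∀ (c : Fin n → ℝ) (y : Fin n → E),
      L (∑ i, c i • y i) = ∑ i, c i * L (y i) := by
    intro c y
    simp only [hL, map_sum, map_smul, smul_eq_mul]
    rw [Finset.sum_comm]
    simp [Finset.mul_sum]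
  -- f is bounded below on the simplex
  have hfbdd : BddBelow (f '' simplexN n) := by
    refine ⟨⨅ i, S i, ?_⟩
    rintro v ⟨lam', hlam', rfl⟩
    rw [hfS]
    calc (⨅ i, S i) = ∑ i, lam' i * (⨅ j, S j) := by
          rw [← Finset.sum_mul, hlam'.2, one_mul]
      _ ≤ ∑ i, lam' i * S i := by
          apply Finset.sum_le_sum
          intro i _
          exact mul_le_mul_of_nonneg_left
            (ciInf_le (Set.finite_range S).bddBelow i) (hlam'.1 i)
  -- coHull is nonempty
  have hcone : (coHullN X).Nonempty := by
    refine ⟨∑ i, ((n : ℝ)⁻¹) • (hXne i).some, fun _ => (n : ℝ)⁻¹, ?_, ?_⟩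
    · constructor
      · intro i; positivity
      · simp [Finset.sum_const, Finset.card_univ]
        field_simp
    · exact ⟨fun i => (hXne i).some, fun i => (hXne i).some_mem, rfl⟩
  -- key inequality: sInf on simplex minus sup of regrets ≤ sInf on coHull
  have key : sInf (f '' simplexN n) - (⨆ i, R i) ≤ sInf (L '' coHullN X) := by
    apply le_csInf (hcone.image L)
    rintro v ⟨z, ⟨c, hc, y, hy, rfl⟩, rfl⟩
    have h1 : ∑ i, c i * (S i - ⨆ j, R j) ≤ ∑ i, c i * L (y i) := by
      apply Finset.sum_le_sum
      intro i _
      apply mul_le_mul_of_nonneg_left _ (hc.1 i)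
      have := hm_le i (y i) (hy i)
      have := hRle i
      simp only [hRdef] at this
      linarith
    have h2 : ∑ i, c i * (S i - ⨆ j, R j)
        = (∑ i, c i * S i) - (⨆ j, R j) := by
      simp only [mul_sub]
      rw [Finset.sum_sub_distrib, ← Finset.sum_mul, hc.2, one_mul]
    have h3 : sInf (f '' simplexN n) ≤ f c :=
      csInf_le hfbdd (Set.mem_image_of_mem _ hc)
    rw [hfS] at h3
    rw [hlin]
    linarith
  have hmain : ∑ t, ℓ t (∑ i, lam t i • x t i)
      = ∑ t, ∑ i, lam t i * ℓ t (x t i) := by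
    simp [map_sum, map_smul, smul_eq_mul]
  have hgoal2 : sInf ((fun lam' => ∑ t, ∑ i, lam' i * ℓ t (x t i)) '' simplexN n)
      = sInf (f '' simplexN n) := rfl
  rw [hmain, hgoal2]
  have : sInf ((fun z => ∑ t, ℓ t z) '' coHullN X) = sInf (L '' coHullN X) := rfl
  rw [this]
  have hsup : (⨆ i, ((∑ t, ℓ t (x t i)) - sInf ((fun x' => ∑ t, ℓ t x') '' X i)))
      = ⨆ j, R j := rfl
  rw [hsup]
  linarith
end

section
/- Let X be a nonempty convex compact subset of a finite-dimensional real inner product space E, let g : E → ℝ be a convex function such that X_g := X ∩ {x : g(x) ≤ 0} is nonempty, let ℓ^1,…,ℓ^T : E → ℝ be linear functions, let x^1,…,x^T ∈ X, let β^1,…,β^T ≥ 0, and for each t let s^t be a subgradient of g at x^t. Define β_⋄^t = β^t if g(x^t) > 0 and β_⋄^t = 0 otherwise, and the penalized linear losses ℓ̃_⋄^t(x) = ℓ^t(x) + β_⋄^t ⟨s^t, x⟩. Then the regret with respect to the penalized losses satisfies: Σ_{t=1}^T ℓ̃_⋄^t(x^t) − min_{x̂ ∈ X} Σ_{t=1}^T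 ℓ̃_⋄^t(x̂) ≥ (Σ_{t=1}^T ℓ^t(x^t) − min_{x̂ ∈ X_g} Σ_{t=1}^T ℓ^t(x̂)) + Σ_{t : g(x^t) > 0} β^t g(x^t). -/
open RealInnerProductSpace

/-- Lagrangian-relaxation construction. The regret with respect to the
penalized losses ℓ̃_⋄^t is at least the regret against the constrained set X_g plus
the accumulated weighted constraint violations. -/
theorem lagrangian_relaxation_regret_lower_bound
    {E : Type*} [NormedAddCommGroup E] [InnerProductSpace ℝ E] [FiniteDimensional ℝ E]
    (X : Set E) (hXne : X.Nonempty) (hXconv : Convex ℝ X) (hXcomp : IsCompact X)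
    (g : E → ℝ) (hg : ConvexOn ℝ Set.univ g)
    (hXg : (X ∩ {x | g x ≤ 0}).Nonempty)
    (T : ℕ) (ℓ : Fin T → E →ₗ[ℝ] ℝ)
    (x : Fin T → E) (hx : ∀ t, x t ∈ X)
    (β : Fin T → ℝ) (hβ : ∀ t, 0 ≤ β t)
    (s : Fin T → E)
    (hs : ∀ t, ∀ z : E, g z ≥ g (x t) + ⟪s t, z - x t⟫) :
    (∑ t, (ℓ t (x t) + (if 0 < g (x t) then β t else 0) * ⟪s t, x t⟫))
        - sInf ((fun x' => ∑ t, (ℓ t x' + (if 0 < g (x t) then β t else 0) * ⟪s t, x'⟫)) '' X)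
      ≥ ((∑ t, ℓ t (x t)) - sInf ((fun x' => ∑ t, ℓ t x') '' (X ∩ {x | g x ≤ 0})))
        + ∑ t ∈ Finset.univ.filter (fun t => 0 < g (x t)), β t * g (x t) := by
  set βd : Fin T → ℝ := fun t => if 0 < g (x t) then β t else 0 with hβd
  have hβd0 : ∀ t, 0 ≤ βd t := by
    intro t; simp only [hβd]; split_ifs with h; exacts [hβ t, le_rfl]
  set F : E → ℝ := fun x' => ∑ t, (ℓ t x' + βd t * ⟪s t, x'⟫) with hF
  set L : E → ℝ := fun x' => ∑ t, ℓ t x' with hL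
  have hgcont : Continuous g := by
    rw [← continuousOn_univ]
    exact hg.continuousOn isOpen_univ
  have hXgcl : IsCompact (X ∩ {x | g x ≤ 0}) :=
    hXcomp.inter_right (isClosed_le hgcont continuous_const)
  have hLcont : Continuous L := by
    apply continuous_finset_sum
    intro t _
    exact (ℓ t).continuous_of_finiteDimensional
  have hFcont : Continuous F := by
    apply continuous_finset_sum
    intro t _
    exact ((ℓ t).continuous_of_finiteDimensional).add
      (continuous_const.mul (continuous_const.inner continuous_id))
  -- minimizer of L on X_g
  obtain ⟨xh, hxh, hxhmin⟩ := hXgcl.exists_isMinOn hXg hLcont.continuousOn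
  have hLinf : sInf (L '' (X ∩ {x | g x ≤ 0})) = L xh := by
    apply IsLeast.csInf_eq
    constructor
    · exact ⟨xh, hxh, rfl⟩
    · rintro v ⟨y, hy, rfl⟩; exact hxhmin hy
  -- bound sInf (F '' X)
  have hbdd : BddBelow (F '' X) := (hXcomp.image hFcont).bddBelow
  have hFle : sInf (F '' X) ≤ F xh := csInf_le hbdd ⟨xh, hxh.1, rfl⟩
  -- pointwise bound on F xh
  have hkey : F xh ≤ L xh + ∑ t, βd t * ⟪s t, x t⟫ - ∑ t, βd t * g (x t) := by
    have : F xh ≤ ∑ t, (ℓ t xh + (βd t * ⟪s t, x t⟫ - βd t * g (x t))) := by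
      apply Finset.sum_le_sum
      intro t _
      have h1 := hs t xh
      rw [inner_sub_right] at h1
      have h2 : g xh ≤ 0 := hxh.2
      have h3 : ⟪s t, xh⟫ ≤ ⟪s t, x t⟫ - g (x t) := by linarith
      have h4 : βd t * ⟪s t, xh⟫ ≤ βd t * (⟪s t, x t⟫ - g (x t)) :=
        mul_le_mul_of_nonneg_left h3 (hβd0 t)
      nlinarith [h4]
    calc F xh ≤ ∑ t, (ℓ t xh + (βd t * ⟪s t, x t⟫ - βd t * g (x t))) := this
      _ = L xh + ∑ t, βd t * ⟪s t, x t⟫ - ∑ t, βd t * g (x t) := by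
        rw [hL]; simp [Finset.sum_add_distrib, Finset.sum_sub_distrib]; ring
  have hfilter : ∑ t ∈ Finset.univ.filter (fun t => 0 < g (x t)), β t * g (x t)
      = ∑ t, βd t * g (x t) := by
    rw [Finset.sum_filter]
    apply Finset.sum_congr rfl
    intro t _
    simp only [hβd]
    split <;> simp
  have hsplit : (∑ t, (ℓ t (x t) + βd t * ⟪s t, x t⟫))
      = (∑ t, ℓ t (x t)) + ∑ t, βd t * ⟪s t, x t⟫ := Finset.sum_add_distrib
  have he1 : (fun x' => ∑ t : Fin T, ((ℓ t) x' + (if 0 < g (x t) then β t else 0) * ⟪s t, x'⟫)) = F := rfl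
  have he2 : (fun x' => ∑ t : Fin T, (ℓ t) x') = L := rfl
  have he3 : (∑ t, (ℓ t (x t) + (if 0 < g (x t) then β t else 0) * ⟪s t, x t⟫))
      = (∑ t, ℓ t (x t)) + ∑ t, βd t * ⟪s t, x t⟫ := hsplit
  rw [hfilter, hLinf, he3]
  linarith [hFle, hkey, hsplit.ge, hsplit.le]
end

section
/- Under the setting of the Lagrangian-relaxation construction (X convex compact, g convex with X_g = X ∩ {g ≤ 0} nonempty, linear losses ℓ^t, decisions x^t ∈ X, penalties β^t ≥ 0 with B := β^1 + ⋯ + β^T > 0, subgradients s^t of g at x^t, β_⋄^t = β^t if g(x^t) > 0 else 0, and ℓ̃_⋄^t(x) = ℓ^t(x) + β_⋄^t ⟨s^t, x⟩), let R := Σ_{t=1}^T ℓ̃_⋄^t(x^t) − min_{x̂ ∈ X} Σ_{t=1}^T ℓ̃_⋄^t(x̂) be the cumulative regret with respect to the penalized losses. Then the weighted average decision x̄ = (1/B) Σ_{t=1}^T β^t x^t satisfies max{0, g(x̄)} ≤ (1/B) ( R + min_{x̂ ∈ X_g} Σ_{t=1}^T ℓ^t(x̂ − x^t) ). -/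
open RealInnerProductSpace

/-- Lagrangian-relaxation construction. The weighted average decision
x̄ = (1/B) Σ_t β^t x^t satisfies max{0, g(x̄)} ≤ (1/B)(R + min_{x̂ ∈ X_g} Σ_t ℓ^t(x̂ − x^t)),
where R is the cumulative regret with respect to the penalized losses. -/
theorem lagrangian_relaxation_approximate_feasibility
    {E : Type*} [NormedAddCommGroup E] [InnerProductSpace ℝ E] [FiniteDimensional ℝ E]
    (X : Set E) (hXne : X.Nonempty) (hXconv : Convex ℝ X) (hXcomp : IsCompact X)
    (g : E → ℝ) (hg : ConvexOn ℝ Set.univ g)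
    (hXg : (X ∩ {x | g x ≤ 0}).Nonempty)
    (T : ℕ) (ℓ : Fin T → E →ₗ[ℝ] ℝ)
    (x : Fin T → E) (hx : ∀ t, x t ∈ X)
    (β : Fin T → ℝ) (hβ : ∀ t, 0 ≤ β t) (hB : 0 < ∑ t, β t)
    (s : Fin T → E)
    (hs : ∀ t, ∀ z : E, g z ≥ g (x t) + ⟪s t, z - x t⟫)
    (R : ℝ)
    (hR : R = (∑ t, (ℓ t (x t) + (if 0 < g (x t) then β t else 0) * ⟪s t, x t⟫))
        - sInf ((fun x' => ∑ t, (ℓ t x'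
            + (if 0 < g (x t) then β t else 0) * ⟪s t, x'⟫)) '' X)) :
    max 0 (g ((1 / ∑ t, β t) • ∑ t, β t • x t))
      ≤ (1 / ∑ t, β t)
          * (R + sInf ((fun x' => ∑ t, ℓ t (x' - x t)) '' (X ∩ {x | g x ≤ 0}))) := by
  set B := ∑ t, β t with hBdef
  set c : Fin T → ℝ := fun t => if 0 < g (x t) then β t else 0 with hc
  have hc0 : ∀ t, 0 ≤ c t := by
    intro t; by_cases h : 0 < g (x t) <;> simp [hc, h, hβ t]
  set F : E → ℝ := fun x' => ∑ t, (ℓ t x' + c t * ⟪s t, x'⟫) with hF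
  have hFcont : Continuous F := by
    apply continuous_finset_sum
    intro t _
    exact ((ℓ t).continuous_of_finiteDimensional).add
      (continuous_const.mul (continuous_const.inner continuous_id))
  have hbdd : BddBelow (F '' X) := (hXcomp.image hFcont).bddBelow
  -- Jensen
  have hmax : ConvexOn ℝ (Set.univ : Set E) (fun z => max 0 (g z)) :=
    (convexOn_const (0:ℝ) convex_univ).sup hg
  have hJ : max 0 (g ((1/B) • ∑ t, β t • x t)) ≤ (1/B) * ∑ t, β t * max 0 (g (x t)) := by
    have := hmax.map_centerMass_le (t := Finset.univ) (w := β) (p := x)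
      (fun i _ => hβ i) (by simpa using hB) (fun i _ => Set.mem_univ _)
    simpa [Finset.centerMass, smul_eq_mul, Finset.mul_sum, one_div, Function.comp] using this
  -- termwise: β * max = c * g
  have hterm : ∀ t, β t * max 0 (g (x t)) = c t * g (x t) := by
    intro t
    by_cases h : 0 < g (x t)
    · simp [hc, h, max_eq_right h.le]
    · simp [hc, h, max_eq_left (not_lt.mp h)]
  -- key bound for each feasible y
  have key : ∀ y, y ∈ X ∩ {z | g z ≤ 0} →
      ∑ t, β t * max 0 (g (x t)) ≤ R + ∑ t, ℓ t (y - x t) := by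
    rintro y ⟨hyX, hgy⟩
    have h1 : ∀ t, c t * g (x t) ≤ c t * ⟪s t, x t - y⟫ := by
      intro t
      apply mul_le_mul_of_nonneg_left _ (hc0 t)
      have := hs t y
      have h2 : ⟪s t, y - x t⟫ = ⟪s t, y⟫ - ⟪s t, x t⟫ := inner_sub_right _ _ _
      have h3 : ⟪s t, x t - y⟫ = ⟪s t, x t⟫ - ⟪s t, y⟫ := inner_sub_right _ _ _
      have hgy' : g y ≤ 0 := hgy
      linarith [this]
    have h4 : ∀ t, c t * ⟪s t, x t - y⟫
        = (ℓ t (x t) + c t * ⟪s t, x t⟫) - (ℓ t y + c t * ⟪s t, y⟫) + ℓ t (y - x t) := by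
      intro t
      rw [inner_sub_right, map_sub]
      ring
    have h5 : ∑ t, c t * ⟪s t, x t - y⟫
        = (∑ t, (ℓ t (x t) + c t * ⟪s t, x t⟫)) - F y + ∑ t, ℓ t (y - x t) := by
      rw [Finset.sum_congr rfl (fun t _ => h4 t), Finset.sum_add_distrib,
        Finset.sum_sub_distrib]
    have h6 : sInf (F '' X) ≤ F y := csInf_le hbdd (Set.mem_image_of_mem _ hyX)
    calc ∑ t, β t * max 0 (g (x t)) = ∑ t, c t * g (x t) :=
          Finset.sum_congr rfl (fun t _ => hterm t)
      _ ≤ ∑ t, c t * ⟪s t, x t - y⟫ := Finset.sum_le_sum (fun t _ => h1 t)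
      _ = (∑ t, (ℓ t (x t) + c t * ⟪s t, x t⟫)) - F y + ∑ t, ℓ t (y - x t) := h5
      _ ≤ R + ∑ t, ℓ t (y - x t) := by rw [hR]; linarith
  -- pass to sInf
  have hne : ((fun x' => ∑ t, ℓ t (x' - x t)) '' (X ∩ {z | g z ≤ 0})).Nonempty :=
    hXg.image _
  have hsinf : ∑ t, β t * max 0 (g (x t)) - R
      ≤ sInf ((fun x' => ∑ t, ℓ t (x' - x t)) '' (X ∩ {z | g z ≤ 0})) := by
    apply le_csInf hne
    rintro b ⟨y, hy, rfl⟩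
    linarith [key y hy]
  have hfin : ∑ t, β t * max 0 (g (x t))
      ≤ R + sInf ((fun x' => ∑ t, ℓ t (x' - x t)) '' (X ∩ {z | g z ≤ 0})) := by
    linarith
  calc max 0 (g ((1/B) • ∑ t, β t • x t)) ≤ (1/B) * ∑ t, β t * max 0 (g (x t)) := hJ
    _ ≤ (1/B) * (R + sInf ((fun x' => ∑ t, ℓ t (x' - x t)) '' (X ∩ {z | g z ≤ 0}))) := by
        apply mul_le_mul_of_nonneg_left hfin
        positivity
end

section
/- Under the setting of the Lagrangian-relaxation construction (X convex compact, g convex with X_g = X ∩ {g ≤ 0} nonempty, linear losses ℓ^t(x) = ⟨c^t, x⟩, decisions x^t ∈ X, subgradients s^t of g at x^t, β_⋄^t = β^t if g(x^t) > 0 else 0, ℓ̃_⋄^t(x) = ℓ^t(x) + β_⋄^t ⟨s^t, x⟩), assume additionally that ‖c^t‖ ≤ L for all t, that the diameter of X is at most D, and that the constant penalties β^t = κLD are used with κ, L, D > 0. Let R := Σ_{t=1}^T ℓ̃_⋄^t(x^t) − min_{x̂ ∈ X} Σ_{t=1}^T ℓ̃_⋄^t(x̂). Then the uniform average x̄ =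 (1/T) Σ_{t=1}^T x^t satisfies the approximate feasibility bound max{0, g(x̄)} ≤ 1/κ + R/(κLDT). -/
open RealInnerProductSpace

/-- Lagrangian relaxation with constant penalties β^t = κLD. The uniform
average decision satisfies the approximate feasibility bound
max{0, g(x̄)} ≤ 1/κ + R/(κLDT). -/
theorem lagrangian_relaxation_constant_penalty_feasibility
    {E : Type*} [NormedAddCommGroup E] [InnerProductSpace ℝ E] [FiniteDimensional ℝ E]
    (X : Set E) (hXne : X.Nonempty) (hXconv : Convex ℝ X) (hXcomp : IsCompact X)
    (g : E → ℝ) (hg : ConvexOn ℝ Set.univ g)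
    (hXg : (X ∩ {x | g x ≤ 0}).Nonempty)
    (T : ℕ) (hT : 0 < T)
    (c : Fin T → E)
    (x : Fin T → E) (hx : ∀ t, x t ∈ X)
    (s : Fin T → E)
    (hs : ∀ t, ∀ z : E, g z ≥ g (x t) + ⟪s t, z - x t⟫)
    (κ L D : ℝ) (hκ : 0 < κ) (hL : 0 < L) (hD : 0 < D)
    (hc : ∀ t, ‖c t‖ ≤ L)
    (hdiam : ∀ p ∈ X, ∀ q ∈ X, ‖p - q‖ ≤ D)
    (β : Fin T → ℝ) (hβ : ∀ t, β t = κ * L * D)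
    (R : ℝ)
    (hR : R = (∑ t, (⟪c t, x t⟫ + (if 0 < g (x t) then β t else 0) * ⟪s t, x t⟫))
        - sInf ((fun x' => ∑ t, (⟪c t, x'⟫
            + (if 0 < g (x t) then β t else 0) * ⟪s t, x'⟫)) '' X)) :
    max 0 (g ((1 / (T : ℝ)) • ∑ t, x t)) ≤ 1 / κ + R / (κ * L * D * T) := by
  obtain ⟨y, hyX, hyg⟩ := hXg
  have hyg' : g y ≤ 0 := hyg
  have hTpos : (0 : ℝ) < T := by exact_mod_cast hT
  set b : Fin T → ℝ := fun t => if 0 < g (x t) then β t else 0 with hbdef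
  have hcont : Continuous fun x' : E => ∑ t, (⟪c t, x'⟫ + b t * ⟪s t, x'⟫) := by
    apply continuous_finset_sum
    intro t _
    exact (continuous_const.inner continuous_id).add
      (continuous_const.mul (continuous_const.inner continuous_id))
  have hbdd : BddBelow ((fun x' => ∑ t, (⟪c t, x'⟫ + b t * ⟪s t, x'⟫)) '' X) :=
    (hXcomp.image hcont).bddBelow
  have hinf : sInf ((fun x' => ∑ t, (⟪c t, x'⟫ + b t * ⟪s t, x'⟫)) '' X)
      ≤ ∑ t, (⟪c t, y⟫ + b t * ⟪s t, y⟫) :=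
    csInf_le hbdd ⟨y, hyX, rfl⟩
  -- termwise lower bound
  have key : ∀ t, -(L * D) + κ * L * D * max 0 (g (x t))
      ≤ (⟪c t, x t⟫ + b t * ⟪s t, x t⟫) - (⟪c t, y⟫ + b t * ⟪s t, y⟫) := by
    intro t
    have h1 : ⟪c t, x t⟫ - ⟪c t, y⟫ = ⟪c t, x t - y⟫ := (inner_sub_right _ _ _).symm
    have hA : -(L * D) ≤ ⟪c t, x t - y⟫ := by
      have h2 := abs_real_inner_le_norm (c t) (x t - y)
      have h3 : ‖c t‖ * ‖x t - y‖ ≤ L * D :=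
        mul_le_mul (hc t) (hdiam _ (hx t) _ hyX) (norm_nonneg _) hL.le
      have := neg_abs_le (⟪c t, x t - y⟫)
      linarith
    have hB : κ * L * D * max 0 (g (x t)) ≤ b t * (⟪s t, x t⟫ - ⟪s t, y⟫) := by
      by_cases hgt : 0 < g (x t)
      · have hbval : b t = κ * L * D := by simp [hbdef, hgt, hβ t]
        have hsub := hs t y
        have h4 : ⟪s t, y - x t⟫ = ⟪s t, y⟫ - ⟪s t, x t⟫ := inner_sub_right _ _ _
        have h5 : g (x t) ≤ ⟪s t, x t⟫ - ⟪s t, y⟫ := by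
          rw [h4] at hsub; linarith
        have hmax : max 0 (g (x t)) = g (x t) := max_eq_right hgt.le
        rw [hbval, hmax]
        exact mul_le_mul_of_nonneg_left h5 (by positivity)
      · have hbval : b t = 0 := by simp [hbdef, hgt]
        have hmax : max 0 (g (x t)) = 0 := max_eq_left (not_lt.mp hgt)
        rw [hbval, hmax]
        simp
    have h6 : b t * (⟪s t, x t⟫ - ⟪s t, y⟫) = b t * ⟪s t, x t⟫ - b t * ⟪s t, y⟫ :=
      mul_sub _ _ _
    linarith [hA, hB, h1, h6]
  set M : ℝ := ∑ t, max 0 (g (x t)) with hMdef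
  have hsum : ∑ t, (-(L * D) + κ * L * D * max 0 (g (x t)))
      = -(L * D) * T + κ * L * D * M := by
    rw [Finset.sum_add_distrib, Finset.sum_const, ← Finset.mul_sum]
    simp [Finset.card_univ]
    ring
  have hRge : -(L * D) * T + κ * L * D * M ≤ R := by
    have h7 := Finset.sum_le_sum (fun t (_ : t ∈ Finset.univ) => key t)
    rw [Finset.sum_sub_distrib] at h7
    rw [hR]
    rw [hsum] at h7
    linarith
  -- Jensen
  have hconv : ConvexOn ℝ (Set.univ : Set E) (fun z => max 0 (g z)) := by
    have h8 := (convexOn_const (0 : ℝ) convex_univ).sup hg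
    simpa [Pi.sup_def] using h8
  have hw : ∑ _t : Fin T, (1 / (T : ℝ)) = 1 := by
    simp [Finset.card_univ]
    field_simp
  have hjensen : max 0 (g ((1 / (T : ℝ)) • ∑ t, x t))
      ≤ ∑ t, (1 / (T : ℝ)) * max 0 (g (x t)) := by
    have h9 := hconv.map_sum_le (w := fun _ : Fin T => (1 / (T : ℝ))) (p := x)
      (t := Finset.univ) (fun _ _ => by positivity) hw (fun _ _ => Set.mem_univ _)
    rw [← Finset.smul_sum] at h9
    simpa using h9
  have hsum2 : ∑ t, (1 / (T : ℝ)) * max 0 (g (x t)) = (1 / (T : ℝ)) * M := by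
    rw [hMdef, Finset.mul_sum]
  have hfin : (1 / (T : ℝ)) * M ≤ 1 / κ + R / (κ * L * D * T) := by
    have hpos : (0 : ℝ) < κ * L * D * T := by positivity
    have heq : (1 : ℝ) / κ + R / (κ * L * D * T) = (L * D * T + R) / (κ * L * D * T) := by
      field_simp
    have heq2 : (1 / (T : ℝ)) * M = (κ * L * D * M) / (κ * L * D * T) := by
      field_simp
    rw [heq, heq2, div_le_div_iff₀ hpos hpos]
    nlinarith [hRge, hpos]
  calc max 0 (g ((1 / (T : ℝ)) • ∑ t, x t))
      ≤ ∑ t, (1 / (T : ℝ)) * max 0 (g (x t)) := hjensen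
    _ = (1 / (T : ℝ)) * M := hsum2
    _ ≤ 1 / κ + R / (κ * L * D * T) := hfin
end

section
/- Under the setting of the Lagrangian-relaxation construction (X convex compact, g convex with X_g = X ∩ {g ≤ 0} nonempty, linear losses ℓ^t, decisions x^t ∈ X, penalties β^t ≥ 0, subgradients s^t of g at x^t, β_⋄^t = β^t if g(x^t) > 0 else 0, ℓ̃_⋄^t(x) = ℓ^t(x) + β_⋄^t ⟨s^t, x⟩), the regret of the decisions x^t measured against the constrained set X_g is bounded by the regret of the underlying minimizer with respect to the penalized losses: Σ_{t=1}^T ℓ^t(x^t) − min_{x̂ ∈ X_g} Σ_{t=1}^T ℓ^t(x̂) ≤ Σ_{t=1}^T ℓ̃_⋄^t(x^t) − min_{x̂ ∈ X} Σ_{t=1}^T ℓ̃_⋄^t(x̂). In particular, if the right-hand side is o(T) then the decisions are Hannan consistent with respect to {ℓ^t} and X_g. -/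
open RealInnerProductSpace

/-- Lagrangian-relaxation construction. The regret of the decisions
measured against the constrained set X_g is bounded by the regret of the underlying
minimizer with respect to the penalized losses (Hannan consistency transfer). -/
theorem lagrangian_relaxation_hannan_consistency
    {E : Type*} [NormedAddCommGroup E] [InnerProductSpace ℝ E] [FiniteDimensional ℝ E]
    (X : Set E) (hXne : X.Nonempty) (hXconv : Convex ℝ X) (hXcomp : IsCompact X)
    (g : E → ℝ) (hg : ConvexOn ℝ Set.univ g)
    (hXg : (X ∩ {x | g x ≤ 0}).Nonempty)
    (T : ℕ) (ℓ : Fin T → E →ₗ[ℝ] ℝ)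
    (x : Fin T → E) (hx : ∀ t, x t ∈ X)
    (β : Fin T → ℝ) (hβ : ∀ t, 0 ≤ β t)
    (s : Fin T → E)
    (hs : ∀ t, ∀ z : E, g z ≥ g (x t) + ⟪s t, z - x t⟫) :
    (∑ t, ℓ t (x t)) - sInf ((fun x' => ∑ t, ℓ t x') '' (X ∩ {x | g x ≤ 0}))
      ≤ (∑ t, (ℓ t (x t) + (if 0 < g (x t) then β t else 0) * ⟪s t, x t⟫))
        - sInf ((fun x' => ∑ t, (ℓ t x'
            + (if 0 < g (x t) then β t else 0) * ⟪s t, x'⟫)) '' X) := by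
  set β' : Fin T → ℝ := fun t => if 0 < g (x t) then β t else 0 with hβ'
  set F : E → ℝ := fun x' => ∑ t, ℓ t x' with hF
  set G : E → ℝ := fun x' => ∑ t, (ℓ t x' + β' t * ⟪s t, x'⟫) with hG
  set C : ℝ := ∑ t, β' t * ⟪s t, x t⟫ with hC
  have hβ'nn : ∀ t, 0 ≤ β' t := by
    intro t; simp only [hβ']; split <;> simp [hβ t]
  -- continuity
  have hFc : Continuous F := by
    apply continuous_finset_sum
    intro t _
    exact (ℓ t).continuous_of_finiteDimensional
  have hGc : Continuous G := by
    apply continuous_finset_sum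
    intro t _
    exact ((ℓ t).continuous_of_finiteDimensional).add
      (continuous_const.mul (continuous_const.inner continuous_id))
  -- pointwise key inequality on X_g
  have key : ∀ z ∈ X ∩ {x | g x ≤ 0}, G z ≤ F z + C := by
    intro z hz
    have : G z = F z + ∑ t, β' t * ⟪s t, z⟫ := by
      simp [hG, hF, Finset.sum_add_distrib]
    rw [this]
    gcongr with t _
    refine Finset.sum_le_sum fun t _ => ?_
    by_cases h : 0 < g (x t)
    · have hsub := hs t z
      have hinner : ⟪s t, z⟫ ≤ ⟪s t, x t⟫ := by
        have : ⟪s t, z - x t⟫ ≤ g z - g (x t) := by linarith [hsub]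
        have hzle : g z ≤ 0 := hz.2
        rw [inner_sub_right] at this
        linarith
      have : β' t = β t := by simp [hβ', h]
      rw [this]
      exact mul_le_mul_of_nonneg_left hinner (hβ t)
    · have : β' t = 0 := by simp [hβ', h]
      simp [this]
  -- boundedness
  have hbddF : BddBelow (F '' X) := (hXcomp.image hFc).bddBelow
  have hbddG : BddBelow (G '' X) := (hXcomp.image hGc).bddBelow
  have hbddFg : BddBelow (F '' (X ∩ {x | g x ≤ 0})) :=
    hbddF.mono (Set.image_mono Set.inter_subset_left)
  have hne : (F '' (X ∩ {x | g x ≤ 0})).Nonempty := hXg.image F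
  -- main inequality: sInf (G '' X) ≤ sInf (F '' X_g) + C
  have hmain : sInf (G '' X) ≤ sInf (F '' (X ∩ {x | g x ≤ 0})) + C := by
    have h1 : sInf (G '' X) - C ≤ sInf (F '' (X ∩ {x | g x ≤ 0})) := by
      apply le_csInf hne
      rintro b ⟨z, hz, rfl⟩
      have h2 : sInf (G '' X) ≤ G z :=
        csInf_le hbddG ⟨z, hz.1, rfl⟩
      linarith [key z hz]
    linarith
  have hsum : (∑ t, (ℓ t (x t) + β' t * ⟪s t, x t⟫))
      = (∑ t, ℓ t (x t)) + C := by
    simp [hC, Finset.sum_add_distrib]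
  rw [hsum]
  linarith
end

section
/- Let X be a nonempty convex compact subset and Y a closed convex subset of a finite-dimensional real inner product space E with X ∩ Y ≠ ∅. Let ℓ^1,…,ℓ^T : E → ℝ be linear functions, let d : E → ℝ be differentiable and μ-strongly convex (μ > 0), let x^1,…,x^T ∈ X, and let z^1,…,z^T ∈ X ∩ Y satisfy the first-order optimality condition ⟨∇d(x^t) − ∇d(z^t), x̂ − z^t⟩ ≤ 0 for all x̂ ∈ X ∩ Y and all t. Let α^1,…,α^T ≥ 0 satisfy (1/μ) Σ_{t=1}^T ℓ^t(z^t − x^t) ≤ Σ_{t=1}^T α^t ‖z^t − x^t‖², and define the modified linear losses ℓ̃^t(x) = ℓ^t(x) + α^t ⟨∇d(x^t) − ∇d(z^t), x⟩. Then the cumulative regret on X ∩ Y of the projected decisions z^t is bounded by the regret of the underlying minimizer on X with respect to the modified losses: Σ_{t=1}^T ℓ^t(z^t) − min_{x̂ ∈ X ∩ Y} Σ_{t=1}^T ℓ^t(x̂) ≤ Σ_{t=1}^T ℓ̃^t(x^t) − min_{x̂ ∈ X} Σ_{t=1}^T ℓ̃^t(x̂). -/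
open RealInnerProductSpace

private lemma first_order_aux {E : Type*} [NormedAddCommGroup E] [InnerProductSpace ℝ E] [CompleteSpace E]
    {f : E → ℝ} {Df : E → E} (hf : ∀ p, HasGradientAt f (Df p) p)
    (hconv : ConvexOn ℝ Set.univ f) (a b : E) :
    ⟪Df a, b - a⟫ ≤ f b - f a := by
  set c : ℝ → E := fun s => a + s • (b - a) with hc
  have hcd : ∀ s : ℝ, HasDerivAt c (b - a) s := by
    intro s
    simpa [hc] using ((hasDerivAt_id s).smul_const (b - a)).const_add a
  have hgd : ∀ s : ℝ, HasDerivAt (f ∘ c) ⟪Df (c s), b - a⟫ s := by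
    intro s
    have h1 : HasFDerivAt f (InnerProductSpace.toDual ℝ E (Df (c s))) (c s) :=
      (hasGradientAt_iff_hasFDerivAt).1 (hf (c s))
    simpa [InnerProductSpace.toDual_apply_apply] using h1.comp_hasDerivAt s (hcd s)
  have hgc : ConvexOn ℝ Set.univ (f ∘ c) := by
    have h2 := hconv.comp_affineMap (AffineMap.lineMap a b : ℝ →ᵃ[ℝ] E)
    have h3 : f ∘ c = f ∘ (AffineMap.lineMap a b : ℝ →ᵃ[ℝ] E) := by
      funext s
      simp [hc, AffineMap.lineMap_apply, add_comm]
    rw [h3]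
    simpa using h2
  have h4 := hgc.le_slope_of_hasDerivAt (Set.mem_univ (0:ℝ)) (Set.mem_univ (1:ℝ)) one_pos (hgd 0)
  simpa [slope, hc] using h4

private lemma grad_strong_aux {E : Type*} [NormedAddCommGroup E] [InnerProductSpace ℝ E] [CompleteSpace E]
    {d : E → ℝ} {Dd : E → E} (hd : ∀ p : E, HasGradientAt d (Dd p) p)
    {μ : ℝ} (hstrong : ConvexOn ℝ Set.univ (fun p => d p - μ / 2 * ‖p‖ ^ 2)) (a b : E) :
    μ * ‖a - b‖ ^ 2 ≤ ⟪Dd a - Dd b, a - b⟫ := by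
  have hDf : ∀ p : E, HasGradientAt (fun p => d p - μ / 2 * ‖p‖ ^ 2) (Dd p - μ • p) p := by
    intro p
    rw [hasGradientAt_iff_hasFDerivAt]
    have h1 : HasFDerivAt d (InnerProductSpace.toDual ℝ E (Dd p)) p :=
      (hasGradientAt_iff_hasFDerivAt).1 (hd p)
    have h2 : HasFDerivAt (fun q : E => ‖q‖ ^ 2) (2 • (innerSL ℝ p)) p :=
      (hasStrictFDerivAt_norm_sq p).hasFDerivAt
    have h3 := h1.sub (h2.const_mul (μ / 2))
    refine h3.congr_fderiv ?_
    ext y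
    simp [InnerProductSpace.toDual_apply_apply, inner_sub_left, real_inner_smul_left, two_smul]
    ring
  have hA := first_order_aux hDf hstrong a b
  have hB := first_order_aux hDf hstrong b a
  have h := add_le_add hA hB
  have hinner : ⟪Dd a - μ • a, b - a⟫ + ⟪Dd b - μ • b, a - b⟫
      = -⟪Dd a - Dd b, a - b⟫ + μ * ‖a - b‖ ^ 2 := by
    rw [← real_inner_self_eq_norm_sq]
    simp only [inner_sub_left, inner_sub_right, real_inner_smul_left, neg_sub]
    rw [real_inner_comm b a]
    ring
  linarith [h, hinner.le]

/-- Projection-based intersection construction. The cumulative regret on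
X ∩ Y of the projected decisions z^t is bounded by the regret of the underlying
minimizer on X with respect to the modified linear losses
ℓ̃^t(x) = ℓ^t(x) + α^t ⟨∇d(x^t) − ∇d(z^t), x⟩. -/
theorem intersection_regret_bound
    {E : Type*} [NormedAddCommGroup E] [InnerProductSpace ℝ E] [FiniteDimensional ℝ E]
    (X Y : Set E)
    (hXne : X.Nonempty) (hXconv : Convex ℝ X) (hXcomp : IsCompact X)
    (hYclosed : IsClosed Y) (hYconv : Convex ℝ Y)
    (hXY : (X ∩ Y).Nonempty)
    (T : ℕ) (ℓ : Fin T → E →ₗ[ℝ] ℝ)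
    (μ : ℝ) (hμ : 0 < μ)
    (d : E → ℝ) (Dd : E → E) (hd : ∀ p : E, HasGradientAt d (Dd p) p)
    (hstrong : ConvexOn ℝ Set.univ (fun p => d p - μ / 2 * ‖p‖ ^ 2))
    (x : Fin T → E) (hx : ∀ t, x t ∈ X)
    (z : Fin T → E) (hz : ∀ t, z t ∈ X ∩ Y)
    (hopt : ∀ t, ∀ x' ∈ X ∩ Y, ⟪Dd (x t) - Dd (z t), x' - z t⟫ ≤ 0)
    (α : Fin T → ℝ) (hα : ∀ t, 0 ≤ α t)
    (hcond : (1 / μ) * ∑ t, ℓ t (z t - x t) ≤ ∑ t, α t * ‖z t - x t‖ ^ 2) :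
    (∑ t, ℓ t (z t)) - sInf ((fun x' => ∑ t, ℓ t x') '' (X ∩ Y))
      ≤ (∑ t, (ℓ t (x t) + α t * ⟪Dd (x t) - Dd (z t), x t⟫))
        - sInf ((fun x' => ∑ t, (ℓ t x' + α t * ⟪Dd (x t) - Dd (z t), x'⟫)) '' X) := by
  set g : Fin T → E := fun t => Dd (x t) - Dd (z t) with hg
  set G : E → ℝ := fun x' => ∑ t, (ℓ t x' + α t * ⟪g t, x'⟫) with hG
  -- key pointwise inequality
  have key : ∀ x' ∈ X ∩ Y,
      (∑ t, ℓ t (z t)) + G x' ≤ (∑ t, (ℓ t (x t) + α t * ⟪g t, x t⟫)) + (∑ t, ℓ t x') := by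
    intro x' hx'
    have hsum1 : ∑ t, α t * ⟪g t, x t - z t⟫ ≤ ∑ t, α t * ⟪g t, x t - x'⟫ := by
      refine Finset.sum_le_sum fun t _ => mul_le_mul_of_nonneg_left ?_ (hα t)
      have h0 := hopt t x' hx'
      have hsplit : x t - z t = (x t - x') + (x' - z t) := by abel
      rw [hsplit, inner_add_right]
      linarith
    have hsum2 : ∑ t, μ * (α t * ‖z t - x t‖ ^ 2) ≤ ∑ t, α t * ⟪g t, x t - z t⟫ := by
      refine Finset.sum_le_sum fun t _ => ?_
      have hgr := grad_strong_aux hd hstrong (x t) (z t)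
      rw [norm_sub_rev] at hgr
      have h2 := mul_le_mul_of_nonneg_left hgr (hα t)
      calc μ * (α t * ‖z t - x t‖ ^ 2) = α t * (μ * ‖z t - x t‖ ^ 2) := by ring
        _ ≤ α t * ⟪g t, x t - z t⟫ := h2
    have hsum3 : ∑ t, ℓ t (z t - x t) ≤ ∑ t, μ * (α t * ‖z t - x t‖ ^ 2) := by
      have h := mul_le_mul_of_nonneg_left hcond hμ.le
      rw [← mul_assoc, mul_one_div, div_self hμ.ne', one_mul] at h
      calc ∑ t, ℓ t (z t - x t) ≤ μ * ∑ t, α t * ‖z t - x t‖ ^ 2 := h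
        _ = ∑ t, μ * (α t * ‖z t - x t‖ ^ 2) := Finset.mul_sum _ _ _
    have hlz : ∑ t, ℓ t (z t - x t) = (∑ t, ℓ t (z t)) - ∑ t, ℓ t (x t) := by
      rw [← Finset.sum_sub_distrib]
      exact Finset.sum_congr rfl fun t _ => map_sub (ℓ t) _ _
    have hdiff : (∑ t, α t * ⟪g t, x t⟫) - ∑ t, α t * ⟪g t, x'⟫
        = ∑ t, α t * ⟪g t, x t - x'⟫ := by
      rw [← Finset.sum_sub_distrib]
      exact Finset.sum_congr rfl fun t _ => by rw [inner_sub_right]; ring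
    have hGx : G x' = (∑ t, ℓ t x') + ∑ t, α t * ⟪g t, x'⟫ := Finset.sum_add_distrib
    have hGxt : (∑ t, (ℓ t (x t) + α t * ⟪g t, x t⟫))
        = (∑ t, ℓ t (x t)) + ∑ t, α t * ⟪g t, x t⟫ := Finset.sum_add_distrib
    rw [hGx, hGxt]
    linarith [hsum1, hsum2, hsum3, hlz.symm.le, hlz.le, hdiff.le, hdiff.symm.le]
  -- continuity and bounds for the infima
  have hGcont : Continuous G := by
    refine continuous_finset_sum _ fun t _ => Continuous.add (ℓ t).continuous_of_finiteDimensional ?_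
    exact continuous_const.mul (Continuous.inner continuous_const continuous_id)
  have hBbdd : BddBelow (G '' X) := (hXcomp.image hGcont).bddBelow
  have hGle : ∀ w ∈ X, sInf (G '' X) ≤ G w := fun w hw => csInf_le hBbdd ⟨w, hw, rfl⟩
  have hne : ((fun x' => ∑ t, ℓ t x') '' (X ∩ Y)).Nonempty := hXY.image _
  have hmain : sInf (G '' X) + (∑ t, ℓ t (z t)) - (∑ t, (ℓ t (x t) + α t * ⟪g t, x t⟫))
      ≤ sInf ((fun x' => ∑ t, ℓ t x') '' (X ∩ Y)) := by
    refine le_csInf hne ?_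
    rintro a ⟨x', hx', rfl⟩
    have h1 := key x' hx'
    have h2 := hGle x' hx'.1
    linarith
  linarith [hmain]
end

section
/- Let E be a finite-dimensional real inner product space and let d : E → ℝ be differentiable, μ-strongly convex (μ > 0), and β-smooth (∇d is Lipschitz continuous with constant β). Let ℓ : E → ℝ be a linear function, let x, z ∈ E with x ≠ z, let α = max{0, ℓ(z − x) / (μ‖z − x‖²)}, and define the linear function ℓ̃(w) = ℓ(w) + α ⟨∇d(x) − ∇d(z), w⟩. Then the operator norm of ℓ̃ satisfies ‖ℓ̃‖ ≤ (1 + β/μ) ‖ℓ‖; in particular, when β ≥ 1 this yields the paper's bound ‖ℓ̃‖ ≤ (β(1+μ)/μ) ‖ℓ‖, so the intersection construction dilates the loss functions by at most a constant factor. -/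
open RealInnerProductSpace

/-- The modified loss ℓ̃(w) = ⟨c, w⟩ + α ⟨∇d(x) − ∇d(z), w⟩ of the
projection-based intersection construction, with the deterministic penalization
coefficient α, has operator norm (i.e. the norm of its representing vector) at most
(1 + β/μ)‖c‖; in particular, when β ≥ 1 this yields ‖ℓ̃‖ ≤ (β(1+μ)/μ)‖c‖. -/
theorem intersection_loss_dilation_bound
    {E : Type*} [NormedAddCommGroup E] [InnerProductSpace ℝ E] [FiniteDimensional ℝ E]
    (μ β : ℝ) (hμ : 0 < μ)
    (d : E → ℝ) (Dd : E → E) (hd : ∀ p : E, HasGradientAt d (Dd p) p)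
    (hstrong : ConvexOn ℝ Set.univ (fun p => d p - μ / 2 * ‖p‖ ^ 2))
    (hsmooth : ∀ p q : E, ‖Dd p - Dd q‖ ≤ β * ‖p - q‖)
    (c : E) (x z : E) (hxz : x ≠ z)
    (α : ℝ) (hα : α = max 0 (⟪c, z - x⟫ / (μ * ‖z - x‖ ^ 2))) :
    ‖c + α • (Dd x - Dd z)‖ ≤ (1 + β / μ) * ‖c‖
      ∧ (1 ≤ β → ‖c + α • (Dd x - Dd z)‖ ≤ β * (1 + μ) / μ * ‖c‖) := by
  have hz : (0:ℝ) < ‖z - x‖ := by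
    rw [norm_pos_iff, sub_ne_zero]; exact fun h => hxz h.symm
  have hα0 : 0 ≤ α := hα ▸ le_max_left _ _
  have hαle : α ≤ ‖c‖ / (μ * ‖z - x‖) := by
    rw [hα, max_le_iff]
    constructor
    · positivity
    · rw [div_le_div_iff₀ (by positivity) (by positivity)]
      have := real_inner_le_norm c (z - x)
      calc ⟪c, z - x⟫ * (μ * ‖z - x‖) ≤ ‖c‖ * ‖z - x‖ * (μ * ‖z - x‖) := by
            apply mul_le_mul_of_nonneg_right this (by positivity)
        _ = ‖c‖ * (μ * ‖z - x‖ ^ 2) := by ring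
  have hβ0 : 0 ≤ β * ‖x - z‖ := le_trans (norm_nonneg _) (hsmooth x z)
  have hmain : ‖c + α • (Dd x - Dd z)‖ ≤ (1 + β / μ) * ‖c‖ := by
    calc ‖c + α • (Dd x - Dd z)‖ ≤ ‖c‖ + ‖α • (Dd x - Dd z)‖ := norm_add_le _ _
      _ = ‖c‖ + α * ‖Dd x - Dd z‖ := by rw [norm_smul, Real.norm_eq_abs, abs_of_nonneg hα0]
      _ ≤ ‖c‖ + α * (β * ‖x - z‖) := by
          exact add_le_add (le_refl _) (mul_le_mul_of_nonneg_left (hsmooth x z) hα0)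
      _ ≤ ‖c‖ + ‖c‖ / (μ * ‖z - x‖) * (β * ‖x - z‖) := by
          exact add_le_add (le_refl _) (mul_le_mul_of_nonneg_right hαle hβ0)
      _ = (1 + β / μ) * ‖c‖ := by
          rw [norm_sub_rev x z]
          field_simp
  refine ⟨hmain, fun hβ1 => le_trans hmain ?_⟩
  apply mul_le_mul_of_nonneg_right _ (norm_nonneg c)
  have hb : β / μ * μ = β := div_mul_cancel₀ β hμ.ne'
  have hb2 : β * (1 + μ) / μ * μ = β * (1 + μ) := div_mul_cancel₀ _ hμ.ne'
  nlinarith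
end
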